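/- For an integer r ≥ 3, the sequence (1, r, C(r,2), C(r,2)/3) is a pure f-vector if and only if r is congruent to 1 or 3 modulo 6. -/

import Mathlib

/-- `macaulayBound i n` is the Macaulay upper bound `n^{<i>}`, computed greedily from
the `i`-binomial expansion of `n`:  if `n = C(n_i,i) + C(n_{i-1},i-1) + ⋯ + C(n_j,j)`
with `n_i > n_{i-1} > ⋯ > n_j ≥ j ≥ 1`, then
`n^{<i>} = C(n_i+1,i+1) + C(n_{i-1}+1,i) + ⋯ + C(n_j+1,j+1)`.
By convention `macaulayBound 0 n = 0` and `macaulayBound i 0 = 0`. -/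
def macaulayBound : ℕ → ℕ → ℕ
  | 0, _ => 0
  | _ + 1, 0 => 0
  | i + 1, n + 1 =>
      let m := Nat.findGreatest (fun m => Nat.choose m (i + 1) ≤ n + 1) (n + i + 2)
      Nat.choose (m + 1) (i + 2) + macaulayBound i (n + 1 - Nat.choose m (i + 1))

/-- `IsPeak L g i`: position `i` is a peak of the finite sequence `g 0, …, g (L-1)`:
the entry at `i` is strictly greater than the preceding entry (or `i` is the first
position) and strictly greater than the following entry (or `i` is the last position). -/
def IsPeak (L : ℕ) (g : ℕ → ℕ) (i : ℕ) : Prop :=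
  i < L ∧ (i = 0 ∨ g (i - 1) < g i) ∧ (i + 1 = L ∨ g (i + 1) < g i)

/-- `IsPureFVector e f`: `(1, f 0, …, f e)` is a pure f-vector, i.e. there are a finite
set `V` and a nonempty family `F` of `(e+1)`-element subsets of `V` such that, for each
`i ≤ e`, `f i` is the number of `(i+1)`-element subsets of `V` contained in at least one
member of `F`. -/
def IsPureFVector (e : ℕ) (f : ℕ → ℕ) : Prop :=
  ∃ (V : Finset ℕ) (F : Finset (Finset ℕ)), F.Nonempty ∧
    (∀ S ∈ F, S ⊆ V ∧ S.card = e + 1) ∧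
    ∀ i ≤ e, f i = ((V.powersetCard (i + 1)).filter (fun T => ∃ S ∈ F, T ⊆ S)).card

/-- The sequence `(1, f 0, f 1, …)` attached to an f-vector `f`. -/
def seqOf (f : ℕ → ℕ) : ℕ → ℕ := fun k => if k = 0 then 1 else f (k - 1)



lemma pure_of_STS (r : ℕ) (V : Finset ℕ) (F : Finset (Finset ℕ))
    (hV : V.card = r) (hne : F.Nonempty)
    (hS : ∀ S ∈ F, S ⊆ V ∧ S.card = 3)
    (hcov : ∀ T ∈ V.powersetCard 2, ∃ S ∈ F, T ⊆ S)
    (hlin : ∀ S ∈ F, ∀ S' ∈ F, ∀ T : Finset ℕ, T.card = 2 → T ⊆ S → T ⊆ S' → S = S')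
    (hpt : ∀ v ∈ V, ∃ S ∈ F, v ∈ S) :
    IsPureFVector 2
      (fun i => if i = 0 then r else if i = 1 then r.choose 2 else r.choose 2 / 3) := by
  have hU : V.powersetCard 2 = F.biUnion (fun S => S.powersetCard 2) := by
    ext T
    simp only [Finset.mem_powersetCard, Finset.mem_biUnion]
    constructor
    · rintro ⟨hTV, hT2⟩
      obtain ⟨S, hSF, hTS⟩ := hcov T (Finset.mem_powersetCard.mpr ⟨hTV, hT2⟩)
      exact ⟨S, hSF, hTS, hT2⟩
    · rintro ⟨S, hSF, hT⟩
      exact ⟨hT.1.trans (hS S hSF).1, hT.2⟩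
  have hkey : 3 * F.card = r.choose 2 := by
    have hdisj : ∀ S ∈ F, ∀ S' ∈ F, S ≠ S' →
        Disjoint (S.powersetCard 2) (S'.powersetCard 2) := by
      intro S hSF S' hS'F hne'
      rw [Finset.disjoint_left]
      intro T hT hT'
      rw [Finset.mem_powersetCard] at hT hT'
      exact hne' (hlin S hSF S' hS'F T hT.2 hT.1 hT'.1)
    have := Finset.card_biUnion hdisj
    rw [← hU, Finset.card_powersetCard, hV] at this
    rw [this]
    rw [Finset.sum_congr rfl (fun S hSF => by
      rw [Finset.card_powersetCard, (hS S hSF).2])]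
    simp [Finset.sum_const, mul_comm]
  refine ⟨V, F, hne, hS, ?_⟩
  intro i hi
  interval_cases i
  · -- i = 0
    have : (V.powersetCard 1).filter (fun T => ∃ S ∈ F, T ⊆ S) = V.powersetCard 1 := by
      apply Finset.filter_true_of_mem
      intro T hT
      rw [Finset.mem_powersetCard] at hT
      obtain ⟨v, rfl⟩ := Finset.card_eq_one.mp hT.2
      obtain ⟨S, hSF, hvS⟩ := hpt v (hT.1 (Finset.mem_singleton_self v))
      exact ⟨S, hSF, Finset.singleton_subset_iff.mpr hvS⟩
    simp [this, Finset.card_powersetCard, hV]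
  · -- i = 1
    have : (V.powersetCard 2).filter (fun T => ∃ S ∈ F, T ⊆ S) = V.powersetCard 2 := by
      apply Finset.filter_true_of_mem
      intro T hT
      obtain ⟨S, hSF, hTS⟩ := hcov T hT
      exact ⟨S, hSF, hTS⟩
    simp [this, Finset.card_powersetCard, hV]
  · -- i = 2
    have hfe : (V.powersetCard 3).filter (fun T => ∃ S ∈ F, T ⊆ S) = F := by
      ext T
      simp only [Finset.mem_filter, Finset.mem_powersetCard]
      constructor
      · rintro ⟨⟨hTV, hT3⟩, S, hSF, hTS⟩
        have : T = S := Finset.eq_of_subset_of_card_le hTS (by rw [(hS S hSF).2, hT3])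
        rwa [this]
      · intro hTF
        exact ⟨⟨(hS T hTF).1, (hS T hTF).2⟩, T, hTF, Finset.Subset.refl T⟩
    simp only [hfe]
    norm_num
    omega

lemma pure_of_design {α : Type} [Fintype α] [DecidableEq α] (r : ℕ)
    (hcard : Fintype.card α = r) (hr : 3 ≤ r)
    (F₀ : Finset (Finset α)) (hne : F₀.Nonempty)
    (h3 : ∀ S ∈ F₀, S.card = 3)
    (hcov : ∀ a b : α, a ≠ b → ∃ S ∈ F₀, a ∈ S ∧ b ∈ S)
    (hlin : ∀ S ∈ F₀, ∀ S' ∈ F₀, ∀ a b : α, a ≠ b →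
      a ∈ S → b ∈ S → a ∈ S' → b ∈ S' → S = S') :
    IsPureFVector 2
      (fun i => if i = 0 then r else if i = 1 then r.choose 2 else r.choose 2 / 3) := by
  let e : α ↪ ℕ := (Fintype.equivFin α).toEmbedding.trans ⟨Fin.val, Fin.val_injective⟩
  apply pure_of_STS r (Finset.univ.map e) (F₀.image (fun S => S.map e))
  · rw [Finset.card_map, Finset.card_univ, hcard]
  · exact hne.image _
  · intro S hS
    obtain ⟨S₀, hS₀, rfl⟩ := Finset.mem_image.mp hS
    exact ⟨Finset.map_subset_map.mpr (Finset.subset_univ S₀),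
      (Finset.card_map _).trans (h3 S₀ hS₀)⟩
  · intro T hT
    rw [Finset.mem_powersetCard] at hT
    obtain ⟨T₀, -, rfl⟩ := Finset.subset_map_iff.mp hT.1
    rw [Finset.card_map] at hT
    obtain ⟨a, b, hab, rfl⟩ := Finset.card_eq_two.mp hT.2
    obtain ⟨S, hSF, haS, hbS⟩ := hcov a b hab
    refine ⟨S.map e, Finset.mem_image_of_mem _ hSF, Finset.map_subset_map.mpr ?_⟩
    intro x hx
    rcases Finset.mem_insert.mp hx with rfl | hx
    · exact haS
    · rw [Finset.mem_singleton.mp hx]; exact hbS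
  · intro S hS S' hS' T hT2 hTS hTS'
    obtain ⟨S₀, hS₀, rfl⟩ := Finset.mem_image.mp hS
    obtain ⟨S₀', hS₀', rfl⟩ := Finset.mem_image.mp hS'
    obtain ⟨x, y, hxy, rfl⟩ := Finset.card_eq_two.mp hT2
    have hx : x ∈ S₀.map e := hTS (by simp)
    have hy : y ∈ S₀.map e := hTS (by simp)
    have hx' : x ∈ S₀'.map e := hTS' (by simp)
    have hy' : y ∈ S₀'.map e := hTS' (by simp)
    obtain ⟨a, haS, rfl⟩ := Finset.mem_map.mp hx
    obtain ⟨b, hbS, rfl⟩ := Finset.mem_map.mp hy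
    obtain ⟨a', haS', ha'⟩ := Finset.mem_map.mp hx'
    obtain ⟨b', hbS', hb'⟩ := Finset.mem_map.mp hy'
    rw [e.injective ha'] at haS'
    rw [e.injective hb'] at hbS'
    have hab : a ≠ b := fun h => hxy (congrArg e h)
    exact congrArg (Finset.map e) (hlin S₀ hS₀ S₀' hS₀' a b hab haS hbS haS' hbS')
  · intro v hv
    obtain ⟨a, -, rfl⟩ := Finset.mem_map.mp hv
    obtain ⟨b, hba⟩ := Fintype.exists_ne_of_one_lt_card (by omega) a
    obtain ⟨S, hSF, haS, -⟩ := hcov a b hba.symm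
    exact ⟨S.map e, Finset.mem_image_of_mem _ hSF, Finset.mem_map_of_mem _ haS⟩


set_option linter.unusedSectionVars false
namespace Bose

variable (m : ℕ)

/-- half: inverse of 2 mod m (m odd) -/
def hf : ZMod m := ((m+1)/2 : ℕ)

lemma two_hf [NeZero m] (hm : m % 2 = 1) : (2 : ZMod m) * hf m = 1 := by
  have h : 2 * ((m+1)/2) = m + 1 := by omega
  have : ((2 * ((m+1)/2) : ℕ) : ZMod m) = ((m + 1 : ℕ) : ZMod m) := by rw [h]
  push_cast at this
  rw [ZMod.natCast_self] at this
  simpa [hf] using this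

variable {m} [NeZero m] (hm : m % 2 = 1)
include hm

lemma hf_add_self (a : ZMod m) : hf m * (a + a) = a := by
  have : hf m * (a + a) = (2 * hf m) * a := by ring
  rw [this, two_hf m hm, one_mul]

lemma hf_eq_zero {a : ZMod m} (h : hf m * a = 0) : a = 0 := by
  have : (2 * hf m) * a = 0 := by rw [mul_assoc, h, mul_zero]
  rwa [two_hf m hm, one_mul] at this

lemma two_ne_zero {d : ZMod m} (hd : d ≠ 0) : d + d ≠ 0 := by
  intro h
  exact hd (by rw [← hf_add_self hm d, h, mul_zero])

def A (x : ZMod m) : Finset (ZMod m × ZMod 3) := {(x,0),(x,1),(x,2)}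

def B (c d : ZMod m) (i : ZMod 3) : Finset (ZMod m × ZMod 3) := {(c+d,i),(c-d,i),(c,i+1)}

omit hm in
lemma mem_A {p : ZMod m × ZMod 3} {x : ZMod m} : p ∈ A x ↔ p.1 = x := by
  have h3 : ∀ k : ZMod 3, k = 0 ∨ k = 1 ∨ k = 2 := by decide
  constructor
  · intro h
    rcases Finset.mem_insert.mp h with h | h
    · rw [h]
    · rcases Finset.mem_insert.mp h with h | h
      · rw [h]
      · rw [Finset.mem_singleton.mp h]
  · intro h
    obtain ⟨p1, p2⟩ := p
    simp only at h
    subst h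
    rcases h3 p2 with h | h | h <;> subst h <;> simp [A]

omit hm in
lemma mem_B {p : ZMod m × ZMod 3} {c d : ZMod m} {i : ZMod 3} :
    p ∈ B c d i ↔ p = (c+d,i) ∨ p = (c-d,i) ∨ p = (c,i+1) := by
  simp [B]

omit hm in
lemma B_neg (c d : ZMod m) (i : ZMod 3) : B c (-d) i = B c d i := by
  unfold B
  rw [show c + -d = c - d by ring, show c - -d = c + d by ring]
  exact Finset.insert_comm _ _ _

def F₀ : Finset (Finset (ZMod m × ZMod 3)) :=
  (Finset.univ.image (A (m := m))) ∪
  ((Finset.univ : Finset (ZMod m × ZMod m × ZMod 3)).filter (fun p => p.2.1 ≠ 0)).image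
    (fun p => B p.1 p.2.1 p.2.2)

omit hm in
lemma mem_F₀ {S : Finset (ZMod m × ZMod 3)} :
    S ∈ (F₀ : Finset (Finset (ZMod m × ZMod 3))) ↔
      (∃ x, S = A x) ∨ ∃ c d i, d ≠ 0 ∧ S = B c d i := by
  simp only [F₀, Finset.mem_union, Finset.mem_image, Finset.mem_filter, Finset.mem_univ,
    true_and]
  constructor
  · rintro (⟨x, hx⟩ | ⟨⟨c, d, i⟩, hd, hB⟩)
    · exact Or.inl ⟨x, hx.symm⟩
    · exact Or.inr ⟨c, d, i, hd, hB.symm⟩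
  · rintro (⟨x, hx⟩ | ⟨c, d, i, hd, hB⟩)
    · exact Or.inl ⟨x, hx.symm⟩
    · exact Or.inr ⟨⟨c, d, i⟩, hd, hB.symm⟩

omit hm in
lemma card_A (x : ZMod m) : (A x).card = 3 := by
  have h01 : ((x,0) : ZMod m × ZMod 3) ≠ (x,1) := by
    simp only [ne_eq, Prod.mk.injEq, not_and]; intro _; decide
  have h02 : ((x,0) : ZMod m × ZMod 3) ≠ (x,2) := by
    simp only [ne_eq, Prod.mk.injEq, not_and]; intro _; decide
  have h12 : ((x,1) : ZMod m × ZMod 3) ≠ (x,2) := by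
    simp only [ne_eq, Prod.mk.injEq, not_and]; intro _; decide
  have hn1 : ((x,0) : ZMod m × ZMod 3) ∉ ({(x,1),(x,2)} : Finset (ZMod m × ZMod 3)) := by
    simp only [Finset.mem_insert, Finset.mem_singleton]; push_neg; exact ⟨h01, h02⟩
  have hn2 : ((x,1) : ZMod m × ZMod 3) ∉ ({(x,2)} : Finset (ZMod m × ZMod 3)) := by
    simp only [Finset.mem_singleton]; exact h12
  rw [A, Finset.card_insert_of_notMem hn1, Finset.card_insert_of_notMem hn2,
    Finset.card_singleton]

lemma card_B {c d : ZMod m} {i : ZMod 3} (hd : d ≠ 0) : (B c d i).card = 3 := by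
  have hii : i ≠ i + 1 := by revert i; decide
  have h1 : ((c+d,i) : ZMod m × ZMod 3) ≠ (c-d,i) := by
    simp only [ne_eq, Prod.mk.injEq, not_and]
    intro h _
    have : d + d = 0 := by
      have := sub_eq_zero.mpr h
      ring_nf at this ⊢
      linear_combination this
    exact two_ne_zero hm hd this
  have h2 : ((c+d,i) : ZMod m × ZMod 3) ≠ (c,i+1) := by
    simp only [ne_eq, Prod.mk.injEq, not_and]
    intro _; exact hii
  have h3 : ((c-d,i) : ZMod m × ZMod 3) ≠ (c,i+1) := by
    simp only [ne_eq, Prod.mk.injEq, not_and]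
    intro _; exact hii
  have hn1 : ((c+d,i) : ZMod m × ZMod 3) ∉ ({(c-d,i),(c,i+1)} : Finset (ZMod m × ZMod 3)) := by
    simp only [Finset.mem_insert, Finset.mem_singleton]; push_neg; exact ⟨h1, h2⟩
  have hn2 : ((c-d,i) : ZMod m × ZMod 3) ∉ ({(c,i+1)} : Finset (ZMod m × ZMod 3)) := by
    simp only [Finset.mem_singleton]; exact h3
  rw [B, Finset.card_insert_of_notMem hn1, Finset.card_insert_of_notMem hn2,
    Finset.card_singleton]

lemma hf_ne_zero {a : ZMod m} (ha : a ≠ 0) : hf m * a ≠ 0 :=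
  fun h => ha (hf_eq_zero hm h)

lemma cover (p q : ZMod m × ZMod 3) (hpq : p ≠ q) :
    ∃ S ∈ (F₀ : Finset (Finset (ZMod m × ZMod 3))), p ∈ S ∧ q ∈ S := by
  obtain ⟨x, i⟩ := p
  obtain ⟨y, j⟩ := q
  by_cases hij : i = j
  · subst hij
    have hxy : x ≠ y := fun h => hpq (by rw [h])
    refine ⟨B (hf m * (x+y)) (hf m * (x-y)) i, ?_, ?_, ?_⟩
    · exact mem_F₀.mpr (Or.inr ⟨_, _, _, hf_ne_zero hm (sub_ne_zero.mpr hxy), rfl⟩)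
    · apply mem_B.mpr
      left
      have : hf m * (x+y) + hf m * (x-y) = hf m * (x + x) := by ring
      rw [this, hf_add_self hm]
    · apply mem_B.mpr
      right; left
      have : hf m * (x+y) - hf m * (x-y) = hf m * (y + y) := by ring
      rw [this, hf_add_self hm]
  · clear hpq
    have hcase : j = i + 1 ∨ i = j + 1 := by revert hij; revert i j; decide
    by_cases hxy : x = y
    · subst hxy
      exact ⟨A x, mem_F₀.mpr (Or.inl ⟨x, rfl⟩), mem_A.mpr rfl, mem_A.mpr rfl⟩
    · rcases hcase with hc | hc
      · subst hc
        refine ⟨B y (x - y) i, mem_F₀.mpr (Or.inr ⟨_, _, _, sub_ne_zero.mpr hxy, rfl⟩),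
          ?_, ?_⟩
        · apply mem_B.mpr; left; rw [add_sub_cancel]
        · apply mem_B.mpr; right; right; rfl
      · subst hc
        refine ⟨B x (y - x) j, mem_F₀.mpr (Or.inr ⟨_, _, _,
          sub_ne_zero.mpr (Ne.symm hxy), rfl⟩), ?_, ?_⟩
        · apply mem_B.mpr; right; right; rfl
        · apply mem_B.mpr; left; rw [add_sub_cancel]

def canon (p q : ZMod m × ZMod 3) : Finset (ZMod m × ZMod 3) :=
  if p.2 = q.2 then B (hf m * (p.1+q.1)) (hf m * (p.1-q.1)) p.2
  else if p.1 = q.1 then A p.1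
  else if q.2 = p.2 + 1 then B q.1 (p.1-q.1) p.2
  else B p.1 (q.1-p.1) q.2

lemma block_eq_canon {S : Finset (ZMod m × ZMod 3)} {p q : ZMod m × ZMod 3}
    (hS : S ∈ (F₀ : Finset (Finset (ZMod m × ZMod 3)))) (hpq : p ≠ q)
    (hp : p ∈ S) (hq : q ∈ S) : S = canon p q := by
  have hne1 : ∀ k : ZMod 3, k ≠ k + 1 := by decide
  have hne2 : ∀ k : ZMod 3, k ≠ k + 1 + 1 := by decide
  rcases mem_F₀.mp hS with ⟨x, rfl⟩ | ⟨c, d, i, hd, rfl⟩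
  · have hp1 : p.1 = x := mem_A.mp hp
    have hq1 : q.1 = x := mem_A.mp hq
    have h2 : p.2 ≠ q.2 := by
      intro h
      exact hpq (Prod.ext (hp1.trans hq1.symm) h)
    rw [canon, if_neg h2, if_pos (hp1.trans hq1.symm), hp1]
  · have h2d : c + d ≠ c - d := by
      intro h
      apply two_ne_zero hm hd
      linear_combination h
    rcases mem_B.mp hp with hp' | hp' | hp' <;> rcases mem_B.mp hq with hq' | hq' | hq' <;>
      subst hp' <;> subst hq' <;> simp only [canon] <;>
      first
      | (exact absurd rfl hpq)
      | skip
    · -- p = (c+d,i), q = (c-d,i)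
      rw [if_pos trivial, show c+d+(c-d) = c+c by ring, show c+d-(c-d) = d+d by ring,
        hf_add_self hm, hf_add_self hm]
    · -- p = (c+d,i), q = (c,i+1)
      rw [if_neg (hne1 i), if_neg (fun h : c + d = c => hd (by linear_combination h)),
        if_pos trivial, show c+d-c = d by ring]
    · -- p = (c-d,i), q = (c+d,i)
      rw [if_pos trivial, show c-d+(c+d) = c+c by ring, show c-d-(c+d) = -d + -d by ring,
        hf_add_self hm, hf_add_self hm, B_neg]
    · -- p = (c-d,i), q = (c,i+1)
      rw [if_neg (hne1 i), if_neg (fun h : c - d = c => hd (by linear_combination -h)),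
        if_pos trivial, show c-d-c = -d by ring, B_neg]
    · -- p = (c,i+1), q = (c+d,i)
      rw [if_neg (fun h : i + 1 = i => hne1 i h.symm),
        if_neg (fun h : c = c + d => hd (by linear_combination -h)),
        if_neg (hne2 i), show c+d-c = d by ring]
    · -- p = (c,i+1), q = (c-d,i)
      rw [if_neg (fun h : i + 1 = i => hne1 i h.symm),
        if_neg (fun h : c = c - d => hd (by linear_combination h)),
        if_neg (hne2 i), show c-d-c = -d by ring, B_neg]

lemma linear {S S' : Finset (ZMod m × ZMod 3)}
    (hS : S ∈ (F₀ : Finset (Finset (ZMod m × ZMod 3))))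
    (hS' : S' ∈ (F₀ : Finset (Finset (ZMod m × ZMod 3))))
    {p q : ZMod m × ZMod 3} (hpq : p ≠ q)
    (hp : p ∈ S) (hq : q ∈ S) (hp' : p ∈ S') (hq' : q ∈ S') : S = S' := by
  rw [block_eq_canon hm hS hpq hp hq, block_eq_canon hm hS' hpq hp' hq']

end Bose


lemma bose_case (r : ℕ) (hr : 3 ≤ r) (h6 : r % 6 = 3) :
    IsPureFVector 2
      (fun i => if i = 0 then r else if i = 1 then r.choose 2 else r.choose 2 / 3) := by
  obtain ⟨m, hm1, rfl⟩ : ∃ m, m % 2 = 1 ∧ r = 3 * m := ⟨r / 3, by omega, by omega⟩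
  haveI : NeZero m := ⟨by omega⟩
  apply pure_of_design (α := ZMod m × ZMod 3) (3 * m)
  · rw [Fintype.card_prod, ZMod.card, ZMod.card]; ring
  · omega
  · exact ⟨Bose.A 0, Bose.mem_F₀.mpr (Or.inl ⟨0, rfl⟩)⟩
  · intro S hS
    rcases Bose.mem_F₀.mp hS with ⟨x, rfl⟩ | ⟨c, d, i, hd, rfl⟩
    · exact Bose.card_A x
    · exact Bose.card_B hm1 hd
  · exact Bose.cover hm1
  · intro S hS S' hS' a b hab ha hb ha' hb'
    exact Bose.linear hm1 hS hS' hab ha hb ha' hb'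


namespace Skolem

variable {n : ℕ}

def h (x : ZMod (2*n)) : ZMod (2*n) :=
  ((if x.val % 2 = 0 then x.val / 2 else x.val / 2 + n : ℕ) : ZMod (2*n))

def h' (y : ZMod (2*n)) : ZMod (2*n) :=
  ((if y.val < n then 2 * y.val else 2 * (y.val - n) + 1 : ℕ) : ZMod (2*n))

variable [NeZero (2*n)] (hn : 1 ≤ n)
include hn

lemma cast_val (x : ZMod (2*n)) : ((x.val : ℕ) : ZMod (2*n)) = x := by
  simp [ZMod.natCast_val, ZMod.cast_id]

lemma h'_h (x : ZMod (2*n)) : h' (h x) = x := by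
  have ha : x.val < 2*n := ZMod.val_lt x
  set a := x.val with hav
  unfold h h'
  by_cases hpar : a % 2 = 0
  · rw [if_pos hpar, ZMod.val_cast_of_lt (by omega : a / 2 < 2*n),
      if_pos (by omega : a / 2 < n), show 2 * (a / 2) = a by omega, hav, cast_val hn]
  · rw [if_neg hpar, ZMod.val_cast_of_lt (by omega : a / 2 + n < 2*n),
      if_neg (by omega : ¬ a / 2 + n < n),
      show 2 * (a / 2 + n - n) + 1 = a by omega, hav, cast_val hn]

lemma h_h' (y : ZMod (2*n)) : h (h' y) = y := by
  have ha : y.val < 2*n := ZMod.val_lt y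
  set a := y.val with hav
  unfold h h'
  by_cases hlt : a < n
  · rw [if_pos hlt, ZMod.val_cast_of_lt (by omega : 2*a < 2*n),
      if_pos (by omega : 2*a % 2 = 0), show 2*a/2 = a by omega, hav, cast_val hn]
  · rw [if_neg hlt, ZMod.val_cast_of_lt (by omega : 2*(a-n)+1 < 2*n),
      if_neg (by omega : ¬ (2*(a-n)+1) % 2 = 0),
      show (2*(a-n)+1)/2 + n = a by omega, hav, cast_val hn]

lemma h_inj {x y : ZMod (2*n)} (hxy : h x = h y) : x = y := by
  rw [← h'_h hn x, ← h'_h hn y, hxy]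

lemma val_natCast_n : ((n : ℕ) : ZMod (2*n)).val = n :=
  ZMod.val_cast_of_lt (by omega)

lemma val_add_n {z : ZMod (2*n)} (hz : z.val < n) :
    (z + ((n : ℕ) : ZMod (2*n))).val = z.val + n := by
  rw [ZMod.val_add, val_natCast_n hn, Nat.mod_eq_of_lt (by omega)]

lemma val_sub_n {z : ZMod (2*n)} (hz : n ≤ z.val) :
    (z - ((n : ℕ) : ZMod (2*n))).val = z.val - n := by
  have h1 : z - ((n : ℕ) : ZMod (2*n)) = ((z.val - n : ℕ) : ZMod (2*n)) := by
    rw [Nat.cast_sub hz, cast_val hn]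
  rw [h1, ZMod.val_cast_of_lt (by have := ZMod.val_lt z; omega)]

lemma h_add_self (x : ZMod (2*n)) :
    h (x + x) = if x.val < n then x else x - ((n : ℕ) : ZMod (2*n)) := by
  have ha : x.val < 2*n := ZMod.val_lt x
  unfold h
  rw [ZMod.val_add]
  by_cases hlt : x.val < n
  · rw [if_pos hlt, show (x.val + x.val) % (2*n) = x.val + x.val from Nat.mod_eq_of_lt (by omega)]
    rw [if_pos (by omega : (x.val + x.val) % 2 = 0), show (x.val + x.val)/2 = x.val by omega,
      cast_val hn]
  · have hmod : (x.val + x.val) % (2*n) = 2*(x.val - n) := by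
      rw [Nat.mod_eq_sub_mod (by omega), Nat.mod_eq_of_lt (by omega)]
      omega
    rw [if_neg hlt, hmod]
    rw [if_pos (by omega : (2*(x.val-n)) % 2 = 0), show (2*(x.val - n))/2 = x.val - n by omega,
      Nat.cast_sub (by omega : n ≤ x.val), cast_val hn]

abbrev Pt (n : ℕ) := Option (ZMod (2*n) × ZMod 3)

variable (n) in
def A (x : ZMod (2*n)) : Finset (Pt n) := {some (x,0), some (x,1), some (x,2)}

variable (n) in
def C (x : ZMod (2*n)) (k : ZMod 3) : Finset (Pt n) :=
  {none, some (x,k), some (x - ((n : ℕ) : ZMod (2*n)), k+1)}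

variable (n) in
def B (i j : ZMod (2*n)) (k : ZMod 3) : Finset (Pt n) :=
  {some (i,k), some (j,k), some (h (i+j), k+1)}

omit [NeZero (2*n)] hn in
lemma mem_A_iff {p : Pt n} {x : ZMod (2*n)} : p ∈ A n x ↔ ∃ k, p = some (x, k) := by
  constructor
  · intro hp
    rcases Finset.mem_insert.mp hp with h | h
    · exact ⟨0, h⟩
    · rcases Finset.mem_insert.mp h with h | h
      · exact ⟨1, h⟩
      · exact ⟨2, Finset.mem_singleton.mp h⟩
  · rintro ⟨k, rfl⟩
    have h3 : k = 0 ∨ k = 1 ∨ k = 2 := by revert k; decide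
    rcases h3 with rfl | rfl | rfl <;> simp [A]

omit [NeZero (2*n)] hn in
lemma mem_C_iff {p : Pt n} {x : ZMod (2*n)} {k : ZMod 3} :
    p ∈ C n x k ↔ p = none ∨ p = some (x,k) ∨ p = some (x - ((n : ℕ) : ZMod (2*n)), k+1) := by
  simp [C]

omit [NeZero (2*n)] hn in
lemma mem_B_iff {p : Pt n} {i j : ZMod (2*n)} {k : ZMod 3} :
    p ∈ B n i j k ↔ p = some (i,k) ∨ p = some (j,k) ∨ p = some (h (i+j), k+1) := by
  simp [B]

omit [NeZero (2*n)] hn in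
lemma B_comm (i j : ZMod (2*n)) (k : ZMod 3) : B n j i k = B n i j k := by
  unfold B
  rw [add_comm j i]
  exact Finset.insert_comm _ _ _

variable (n) in
def F₀ : Finset (Finset (Pt n)) :=
  ((Finset.univ.filter (fun x : ZMod (2*n) => x.val < n)).image (A n)) ∪
  (((Finset.univ.filter (fun x : ZMod (2*n) => n ≤ x.val)) ×ˢ
      (Finset.univ : Finset (ZMod 3))).image (fun p => C n p.1 p.2)) ∪
  (((Finset.univ : Finset (ZMod (2*n) × ZMod (2*n) × ZMod 3)).filter
      (fun p => p.1 ≠ p.2.1)).image (fun p => B n p.1 p.2.1 p.2.2))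

omit hn in
lemma mem_F₀ {S : Finset (Pt n)} :
    S ∈ F₀ n ↔ (∃ x, x.val < n ∧ S = A n x) ∨ (∃ x k, n ≤ x.val ∧ S = C n x k) ∨
      (∃ i j k, i ≠ j ∧ S = B n i j k) := by
  simp only [F₀, Finset.mem_union, Finset.mem_image, Finset.mem_filter, Finset.mem_univ,
    true_and, Finset.mem_product, and_assoc]
  constructor
  · rintro ((⟨x, hx, hA⟩ | ⟨⟨x, k⟩, hx, hC⟩) | ⟨⟨i, j, k⟩, hij, hB⟩)
    · exact Or.inl ⟨x, hx, hA.symm⟩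
    · exact Or.inr (Or.inl ⟨x, k, hx, hC.symm⟩)
    · exact Or.inr (Or.inr ⟨i, j, k, hij, hB.symm⟩)
  · rintro (⟨x, hx, hA⟩ | ⟨x, k, hx, hC⟩ | ⟨i, j, k, hij, hB⟩)
    · exact Or.inl (Or.inl ⟨x, hx, hA.symm⟩)
    · exact Or.inl (Or.inr ⟨⟨x, k⟩, hx, hC.symm⟩)
    · exact Or.inr ⟨⟨i, j, k⟩, hij, hB.symm⟩

omit [NeZero (2*n)] hn in
lemma card_A (x : ZMod (2*n)) : (A n x).card = 3 := by
  have h01 : (some (x,0) : Pt n) ≠ some (x,1) := by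
    simp only [ne_eq, Option.some.injEq, Prod.mk.injEq, not_and]; intro _; decide
  have h02 : (some (x,0) : Pt n) ≠ some (x,2) := by
    simp only [ne_eq, Option.some.injEq, Prod.mk.injEq, not_and]; intro _; decide
  have h12 : (some (x,1) : Pt n) ≠ some (x,2) := by
    simp only [ne_eq, Option.some.injEq, Prod.mk.injEq, not_and]; intro _; decide
  rw [A, Finset.card_insert_of_notMem (by
      simp only [Finset.mem_insert, Finset.mem_singleton]; push_neg; exact ⟨h01, h02⟩),
    Finset.card_insert_of_notMem (by simpa using h12), Finset.card_singleton]

omit [NeZero (2*n)] hn in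
lemma card_C (x : ZMod (2*n)) (k : ZMod 3) : (C n x k).card = 3 := by
  have hkk : k ≠ k + 1 := by revert k; decide
  have h12 : (some (x,k) : Pt n) ≠ some (x - ((n : ℕ) : ZMod (2*n)), k+1) := by
    simp only [ne_eq, Option.some.injEq, Prod.mk.injEq, not_and]; intro _; exact hkk
  rw [C, Finset.card_insert_of_notMem (by simp),
    Finset.card_insert_of_notMem (by simpa using h12), Finset.card_singleton]

omit [NeZero (2*n)] hn in
lemma card_B {i j : ZMod (2*n)} (hij : i ≠ j) (k : ZMod 3) : (B n i j k).card = 3 := by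
  have hkk : k ≠ k + 1 := by revert k; decide
  have h12 : (some (i,k) : Pt n) ≠ some (j,k) := by
    simp only [ne_eq, Option.some.injEq, Prod.mk.injEq, not_and]
    intro h; exact absurd h hij
  have h13 : (some (i,k) : Pt n) ≠ some (h (i+j), k+1) := by
    simp only [ne_eq, Option.some.injEq, Prod.mk.injEq, not_and]; intro _; exact hkk
  have h23 : (some (j,k) : Pt n) ≠ some (h (i+j), k+1) := by
    simp only [ne_eq, Option.some.injEq, Prod.mk.injEq, not_and]; intro _; exact hkk
  rw [B, Finset.card_insert_of_notMem (by
      simp only [Finset.mem_insert, Finset.mem_singleton]; push_neg; exact ⟨h12, h13⟩),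
    Finset.card_insert_of_notMem (by simpa using h23), Finset.card_singleton]

lemma cover_none (z : ZMod (2*n)) (k : ZMod 3) :
    ∃ S ∈ F₀ n, (none : Pt n) ∈ S ∧ some (z,k) ∈ S := by
  by_cases hz : n ≤ z.val
  · refine ⟨C n z k, mem_F₀.mpr (Or.inr (Or.inl ⟨z, k, hz, rfl⟩)), ?_, ?_⟩
    · exact mem_C_iff.mpr (Or.inl rfl)
    · exact mem_C_iff.mpr (Or.inr (Or.inl rfl))
  · refine ⟨C n (z + ((n : ℕ) : ZMod (2*n))) (k-1),
      mem_F₀.mpr (Or.inr (Or.inl ⟨_, _, by rw [val_add_n hn (by omega)]; omega, rfl⟩)),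
      mem_C_iff.mpr (Or.inl rfl), mem_C_iff.mpr (Or.inr (Or.inr ?_))⟩
    rw [add_sub_cancel_right, sub_add_cancel]

lemma cover_cross (x y : ZMod (2*n)) (k : ZMod 3) :
    ∃ S ∈ F₀ n, (some (x,k) : Pt n) ∈ S ∧ some (y,k+1) ∈ S := by
  by_cases hy : y = h (x + x)
  · subst hy
    rw [h_add_self hn]
    by_cases hx : x.val < n
    · rw [if_pos hx]
      exact ⟨A n x, mem_F₀.mpr (Or.inl ⟨x, hx, rfl⟩),
        mem_A_iff.mpr ⟨k, rfl⟩, mem_A_iff.mpr ⟨k+1, rfl⟩⟩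
    · rw [if_neg hx]
      exact ⟨C n x k, mem_F₀.mpr (Or.inr (Or.inl ⟨x, k, by omega, rfl⟩)),
        mem_C_iff.mpr (Or.inr (Or.inl rfl)), mem_C_iff.mpr (Or.inr (Or.inr rfl))⟩
  · have hne : x ≠ h' y - x := by
      intro hcon
      apply hy
      rw [show x + x = h' y by linear_combination hcon, h_h' hn]
    refine ⟨B n x (h' y - x) k, mem_F₀.mpr (Or.inr (Or.inr ⟨_, _, _, hne, rfl⟩)),
      mem_B_iff.mpr (Or.inl rfl), mem_B_iff.mpr (Or.inr (Or.inr ?_))⟩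
    rw [show x + (h' y - x) = h' y by ring, h_h' hn]

lemma cover (p q : Pt n) (hpq : p ≠ q) : ∃ S ∈ F₀ n, p ∈ S ∧ q ∈ S := by
  match p, q with
  | none, none => exact absurd rfl hpq
  | none, some (z,k) => exact cover_none hn z k
  | some (z,k), none =>
      obtain ⟨S, hS, h1, h2⟩ := cover_none hn z k
      exact ⟨S, hS, h2, h1⟩
  | some (x,k), some (y,l) =>
      by_cases hkl : k = l
      · subst hkl
        have hxy : x ≠ y := fun h => hpq (by rw [h])
        exact ⟨B n x y k, mem_F₀.mpr (Or.inr (Or.inr ⟨_, _, _, hxy, rfl⟩)),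
          mem_B_iff.mpr (Or.inl rfl), mem_B_iff.mpr (Or.inr (Or.inl rfl))⟩
      · have hcase : l = k + 1 ∨ k = l + 1 := by clear hpq; revert hkl; revert k l; decide
        rcases hcase with rfl | rfl
        · exact cover_cross hn x y k
        · obtain ⟨S, hS, h1, h2⟩ := cover_cross hn y x l
          exact ⟨S, hS, h2, h1⟩

def blockOf (p q : Pt n) : Finset (Pt n) :=
  match p, q with
  | none, none => ∅
  | none, some (z,k) =>
      if n ≤ z.val then C n z k else C n (z + ((n : ℕ) : ZMod (2*n))) (k-1)
  | some (z,k), none =>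
      if n ≤ z.val then C n z k else C n (z + ((n : ℕ) : ZMod (2*n))) (k-1)
  | some (x,k), some (y,l) =>
      if k = l then B n x y k
      else if l = k + 1 then
        (if y = h (x+x) then (if x.val < n then A n x else C n x k)
         else B n x (h' y - x) k)
      else
        (if x = h (y+y) then (if y.val < n then A n y else C n y l)
         else B n y (h' x - y) l)

lemma block_eq {S : Finset (Pt n)} {p q : Pt n}
    (hS : S ∈ F₀ n) (hpq : p ≠ q) (hp : p ∈ S) (hq : q ∈ S) : S = blockOf p q := by
  have hne1 : ∀ k : ZMod 3, k ≠ k + 1 := by decide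
  have hne2 : ∀ k : ZMod 3, k ≠ k + 1 + 1 := by decide
  rcases mem_F₀.mp hS with ⟨x, hx, rfl⟩ | ⟨z, k', hz, rfl⟩ | ⟨i, j, k'', hij, rfl⟩
  · -- A case
    obtain ⟨kp, rfl⟩ := mem_A_iff.mp hp
    obtain ⟨kq, rfl⟩ := mem_A_iff.mp hq
    have hk : kp ≠ kq := fun h => hpq (by rw [h])
    simp only [blockOf]
    rw [if_neg hk]
    by_cases hc : kq = kp + 1
    · rw [if_pos hc, if_pos (show x = h (x+x) by rw [h_add_self hn, if_pos hx]), if_pos hx]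
    · rw [if_neg hc, if_pos (show x = h (x+x) by rw [h_add_self hn, if_pos hx]), if_pos hx]
  · -- C case
    have hzlt : z.val < 2*n := ZMod.val_lt z
    have hzn : (z - ((n : ℕ) : ZMod (2*n))).val = z.val - n := val_sub_n hn hz
    have hvn : ¬ n ≤ (z - ((n : ℕ) : ZMod (2*n))).val := by omega
    rcases mem_C_iff.mp hp with rfl | rfl | rfl <;>
      rcases mem_C_iff.mp hq with rfl | rfl | rfl
    · exact absurd rfl hpq
    · simp only [blockOf]; rw [if_pos hz]
    · simp only [blockOf]
      rw [if_neg hvn, sub_add_cancel, add_sub_cancel_right]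
    · simp only [blockOf]; rw [if_pos hz]
    · exact absurd rfl hpq
    · simp only [blockOf]
      rw [if_pos trivial,
        if_pos (show z - ((n : ℕ) : ZMod (2*n)) = h (z+z) by
          rw [h_add_self hn, if_neg (by omega)]),
        if_neg (by omega : ¬ z.val < n), if_neg (hne1 k')]
    · simp only [blockOf]
      rw [if_neg hvn, sub_add_cancel, add_sub_cancel_right]
    · simp only [blockOf]
      rw [if_neg (fun h : k' + 1 = k' => hne1 k' h.symm), if_neg (hne2 k'),
        if_pos (show z - ((n : ℕ) : ZMod (2*n)) = h (z+z) by
          rw [h_add_self hn, if_neg (by omega)]),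
        if_neg (by omega : ¬ z.val < n)]
    · exact absurd rfl hpq
  · -- B case
    have hBne : h (i+j) ≠ h (i+i) := fun hcon => hij (by
      have h2 := h_inj hn hcon; linear_combination -h2)
    have hBne' : h (i+j) ≠ h (j+j) := fun hcon => hij (by
      have h2 := h_inj hn hcon; linear_combination h2)
    rcases mem_B_iff.mp hp with rfl | rfl | rfl <;>
      rcases mem_B_iff.mp hq with rfl | rfl | rfl
    · exact absurd rfl hpq
    · simp only [blockOf]; rw [if_pos trivial]
    · simp only [blockOf]
      rw [if_pos trivial, if_neg hBne, h'_h hn, add_sub_cancel_left, if_neg (hne1 k'')]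
    · simp only [blockOf]
      rw [if_pos trivial, B_comm]
    · exact absurd rfl hpq
    · simp only [blockOf]
      rw [if_pos trivial, if_neg hBne', h'_h hn, add_sub_cancel_right, B_comm,
        if_neg (hne1 k'')]
    · simp only [blockOf]
      rw [if_neg (fun h : k'' + 1 = k'' => hne1 k'' h.symm), if_neg (hne2 k''),
        if_neg hBne, h'_h hn, add_sub_cancel_left]
    · simp only [blockOf]
      rw [if_neg (fun h : k'' + 1 = k'' => hne1 k'' h.symm), if_neg (hne2 k''),
        if_neg hBne', h'_h hn, add_sub_cancel_right, B_comm]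
    · exact absurd rfl hpq

lemma linear {S S' : Finset (Pt n)}
    (hS : S ∈ F₀ n) (hS' : S' ∈ F₀ n) {p q : Pt n} (hpq : p ≠ q)
    (hp : p ∈ S) (hq : q ∈ S) (hp' : p ∈ S') (hq' : q ∈ S') : S = S' := by
  rw [block_eq hn hS hpq hp hq, block_eq hn hS' hpq hp' hq']

end Skolem


lemma skolem_case (r : ℕ) (hr : 3 ≤ r) (h6 : r % 6 = 1) :
    IsPureFVector 2
      (fun i => if i = 0 then r else if i = 1 then r.choose 2 else r.choose 2 / 3) := by
  obtain ⟨n, hn, rfl⟩ : ∃ n, 1 ≤ n ∧ r = 6*n+1 := ⟨r/6, by omega, by omega⟩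
  haveI : NeZero (2*n) := ⟨by omega⟩
  apply pure_of_design (α := Skolem.Pt n) (6*n+1)
  · rw [Fintype.card_option, Fintype.card_prod, ZMod.card, ZMod.card]; ring
  · omega
  · refine ⟨Skolem.C n ((n : ℕ) : ZMod (2*n)) 0, Skolem.mem_F₀.mpr (Or.inr (Or.inl
      ⟨_, _, ?_, rfl⟩))⟩
    rw [Skolem.val_natCast_n hn]
  · intro S hS
    rcases Skolem.mem_F₀.mp hS with ⟨x, _, rfl⟩ | ⟨x, k, _, rfl⟩ | ⟨i, j, k, hij, rfl⟩
    · exact Skolem.card_A x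
    · exact Skolem.card_C x k
    · exact Skolem.card_B hij k
  · exact Skolem.cover hn
  · intro S hS S' hS' a b hab ha hb ha' hb'
    exact Skolem.linear hn hS hS' hab ha hb ha' hb'


lemma pairs_through (X : Finset ℕ) (v : ℕ) (hv : v ∈ X) :
    ((X.powersetCard 2).filter (fun T => v ∈ T)).card = X.card - 1 := by
  rw [← Finset.card_erase_of_mem hv]
  symm
  apply Finset.card_nbij (fun w => {v, w})
  · intro w hw
    rw [Finset.mem_coe, Finset.mem_erase] at hw
    rw [Finset.mem_coe, Finset.mem_filter, Finset.mem_powersetCard]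
    refine ⟨⟨?_, ?_⟩, Finset.mem_insert_self v _⟩
    · intro x hx
      rcases Finset.mem_insert.mp hx with rfl | hx
      · exact hv
      · rw [Finset.mem_singleton.mp hx]; exact hw.2
    · rw [Finset.card_insert_of_notMem (by simp [Ne.symm hw.1]), Finset.card_singleton]
  · intro w hw w' hw' hww
    simp only [Finset.coe_erase, Set.mem_diff, Finset.mem_coe] at hw hw'
    have hww' : ({v, w} : Finset ℕ) = {v, w'} := hww
    have : w ∈ ({v, w'} : Finset ℕ) := by rw [← hww']; simp
    rcases Finset.mem_insert.mp this with rfl | h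
    · simp at hw
    · exact Finset.mem_singleton.mp h
  · intro T hT
    simp only [Finset.coe_filter, Set.mem_setOf_eq, Finset.mem_powersetCard] at hT
    obtain ⟨⟨hTX, hT2⟩, hvT⟩ := hT
    obtain ⟨x, y, hxy, rfl⟩ := Finset.card_eq_two.mp hT2
    rcases Finset.mem_insert.mp hvT with rfl | h
    · refine ⟨y, ?_, rfl⟩
      simp only [Finset.coe_erase, Set.mem_diff, Finset.mem_coe, Set.mem_singleton_iff]
      exact ⟨hTX (by simp), by simpa using hxy.symm⟩
    · have hvy : v = y := Finset.mem_singleton.mp h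
      refine ⟨x, ?_, ?_⟩
      · simp only [Finset.coe_erase, Set.mem_diff, Finset.mem_coe, Set.mem_singleton_iff]
        exact ⟨hTX (by simp), fun hxv => hxy (hxv.trans hvy)⟩
      · show ({v, x} : Finset ℕ) = {x, y}
        rw [hvy]
        exact Finset.pair_comm y x


lemma necessity (r : ℕ) (hr : 3 ≤ r)
    (h : IsPureFVector 2
      (fun i => if i = 0 then r else if i = 1 then r.choose 2 else r.choose 2 / 3)) :
    r % 6 = 1 ∨ r % 6 = 3 := by
  classical
  obtain ⟨V, F, hne, hS, hcount⟩ := h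
  have h0 := hcount 0 (by norm_num)
  have h1 := hcount 1 (by norm_num)
  have h2 := hcount 2 (by norm_num)
  norm_num at h0 h1 h2
  set U2 := (V.powersetCard 2).filter (fun T => ∃ S ∈ F, T ⊆ S) with hU2def
  -- the 3-dimensional faces are exactly F
  have hF3 : (V.powersetCard 3).filter (fun T => ∃ S ∈ F, T ⊆ S) = F := by
    ext T
    simp only [Finset.mem_filter, Finset.mem_powersetCard]
    constructor
    · rintro ⟨⟨hTV, hT3⟩, S, hSF, hTS⟩
      have : T = S := Finset.eq_of_subset_of_card_le hTS (by rw [(hS S hSF).2, hT3])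
      rwa [this]
    · intro hTF
      exact ⟨⟨(hS T hTF).1, (hS T hTF).2⟩, T, hTF, Finset.Subset.refl T⟩
  rw [hF3] at h2
  -- U2 as a union of pair-sets of blocks
  have hU : U2 = F.biUnion (fun S => S.powersetCard 2) := by
    ext T
    simp only [hU2def, Finset.mem_filter, Finset.mem_powersetCard, Finset.mem_biUnion]
    constructor
    · rintro ⟨⟨hTV, hT2⟩, S, hSF, hTS⟩
      exact ⟨S, hSF, hTS, hT2⟩
    · rintro ⟨S, hSF, hTS, hT2⟩
      exact ⟨⟨hTS.trans (hS S hSF).1, hT2⟩, S, hSF, hTS⟩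
  have hPcard : ∀ S ∈ F, (S.powersetCard 2).card = 3 := by
    intro S hSF
    rw [Finset.card_powersetCard, (hS S hSF).2]
    norm_num
  have hle : U2.card ≤ 3 * F.card := by
    rw [hU]
    calc (F.biUnion (fun S => S.powersetCard 2)).card
        ≤ ∑ S ∈ F, (S.powersetCard 2).card := Finset.card_biUnion_le
      _ = ∑ S ∈ F, 3 := Finset.sum_congr rfl hPcard
      _ = 3 * F.card := by rw [Finset.sum_const, smul_eq_mul, mul_comm]
  -- 3 divides choose r 2 and 3 * |F| = choose r 2
  have hdvd3 : 3 ∣ r.choose 2 := by omega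
  have h3F : 3 * F.card = r.choose 2 := by omega
  -- multiplicity one
  have hsum : ∑ S ∈ F, (S.powersetCard 2).card
      = ∑ T ∈ U2, (F.filter (fun S => T ⊆ S)).card := by
    have hPS : ∀ S ∈ F, S.powersetCard 2 = U2.filter (fun T => T ⊆ S) := by
      intro S hSF
      ext T
      simp only [hU2def, Finset.mem_filter, Finset.mem_powersetCard]
      constructor
      · rintro ⟨hTS, hT2⟩
        exact ⟨⟨⟨hTS.trans (hS S hSF).1, hT2⟩, S, hSF, hTS⟩, hTS⟩
      · rintro ⟨⟨⟨_, hT2⟩, _⟩, hTS⟩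
        exact ⟨hTS, hT2⟩
    rw [Finset.sum_congr rfl (fun S hSF => by rw [hPS S hSF])]
    simp only [Finset.card_filter]
    exact Finset.sum_comm
  have hsum2 : ∑ T ∈ U2, (F.filter (fun S => T ⊆ S)).card = ∑ T ∈ U2, 1 := by
    have e1 : ∑ S ∈ F, (S.powersetCard 2).card = 3 * F.card := by
      rw [Finset.sum_congr rfl hPcard, Finset.sum_const, smul_eq_mul, mul_comm]
    have e2 : (∑ T ∈ U2, 1) = U2.card := by
      rw [Finset.sum_const, smul_eq_mul, mul_one]
    rw [← hsum, e1, e2, h3F, ← h1]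
  have hmult : ∀ T ∈ U2, (F.filter (fun S => T ⊆ S)).card = 1 := by
    intro T hT
    have hge : ∀ T' ∈ U2, 1 ≤ (F.filter (fun S => T' ⊆ S)).card := by
      intro T' hT'
      rw [hU2def, Finset.mem_filter] at hT'
      obtain ⟨-, S, hSF, hTS⟩ := hT'
      exact Finset.card_pos.mpr ⟨S, Finset.mem_filter.mpr ⟨hSF, hTS⟩⟩
    exact ((Finset.sum_eq_sum_iff_of_le (fun i hi => hge i hi)).mp hsum2.symm T hT).symm
  -- covered vertex set
  set W := V.filter (fun v => ∃ S ∈ F, v ∈ S) with hWdef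
  have hWcard : W.card = r := by
    rw [h0]
    apply Finset.card_nbij (fun v => {v})
    · intro v hv
      rw [hWdef, Finset.mem_coe, Finset.mem_filter] at hv
      obtain ⟨hvV, S, hSF, hvS⟩ := hv
      rw [Finset.mem_coe, Finset.mem_filter, Finset.mem_powersetCard]
      exact ⟨⟨Finset.singleton_subset_iff.mpr hvV, Finset.card_singleton v⟩,
        S, hSF, Finset.singleton_subset_iff.mpr hvS⟩
    · intro v _ v' _ hvv
      exact Finset.singleton_injective hvv
    · intro T hT
      simp only [Finset.coe_filter, Set.mem_setOf_eq, Finset.mem_powersetCard] at hT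
      obtain ⟨⟨hTV, hT1⟩, S, hSF, hTS⟩ := hT
      obtain ⟨v, rfl⟩ := Finset.card_eq_one.mp hT1
      refine ⟨v, ?_, rfl⟩
      rw [hWdef, Finset.coe_filter]
      exact ⟨hTV (Finset.mem_singleton_self v),
        S, hSF, hTS (Finset.mem_singleton_self v)⟩
  -- every pair of covered vertices is covered
  have hWpairs : U2 = W.powersetCard 2 := by
    apply Finset.eq_of_subset_of_card_le
    · intro T hT
      have hT' := hT
      rw [hU2def, Finset.mem_filter, Finset.mem_powersetCard] at hT'
      obtain ⟨⟨hTV, hT2⟩, S, hSF, hTS⟩ := hT'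
      rw [Finset.mem_powersetCard]
      refine ⟨?_, hT2⟩
      intro x hx
      rw [hWdef, Finset.mem_filter]
      exact ⟨hTV hx, S, hSF, hTS hx⟩
    · rw [Finset.card_powersetCard, hWcard, ← h1]
  -- pick a covered vertex
  have hWne : W.Nonempty := Finset.card_pos.mp (by omega)
  obtain ⟨v, hvW⟩ := hWne
  -- pairs through v
  have hDv : (U2.filter (fun T => v ∈ T)).card = r - 1 := by
    rw [hWpairs, pairs_through W v hvW, hWcard]
  set Fv := F.filter (fun S => v ∈ S) with hFvdef
  have hDvU : U2.filter (fun T => v ∈ T)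
      = Fv.biUnion (fun S => (S.powersetCard 2).filter (fun T => v ∈ T)) := by
    ext T
    simp only [Finset.mem_filter, Finset.mem_biUnion, hU2def, Finset.mem_powersetCard,
      hFvdef]
    constructor
    · rintro ⟨⟨⟨hTV, hT2⟩, S, hSF, hTS⟩, hvT⟩
      exact ⟨S, ⟨hSF, hTS hvT⟩, ⟨hTS, hT2⟩, hvT⟩
    · rintro ⟨S, ⟨hSF, hvS⟩, ⟨hTS, hT2⟩, hvT⟩
      exact ⟨⟨⟨hTS.trans (hS S hSF).1, hT2⟩, S, hSF, hTS⟩, hvT⟩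
  have hdisj : ∀ S ∈ Fv, ∀ S' ∈ Fv, S ≠ S' →
      Disjoint ((S.powersetCard 2).filter (fun T => v ∈ T))
        ((S'.powersetCard 2).filter (fun T => v ∈ T)) := by
    intro S hSFv S' hS'Fv hne'
    have hSF := (Finset.mem_filter.mp hSFv).1
    have hS'F := (Finset.mem_filter.mp hS'Fv).1
    rw [Finset.disjoint_left]
    intro T hT hT'
    rw [Finset.mem_filter, Finset.mem_powersetCard] at hT hT'
    have hTU2 : T ∈ U2 := by
      rw [hU2def, Finset.mem_filter, Finset.mem_powersetCard]
      exact ⟨⟨hT.1.1.trans (hS S hSF).1, hT.1.2⟩, S, hSF, hT.1.1⟩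
    have h1' := hmult T hTU2
    have hSin : S ∈ F.filter (fun S => T ⊆ S) := Finset.mem_filter.mpr ⟨hSF, hT.1.1⟩
    have hS'in : S' ∈ F.filter (fun S => T ⊆ S) := Finset.mem_filter.mpr ⟨hS'F, hT'.1.1⟩
    obtain ⟨X, hX⟩ := Finset.card_eq_one.mp h1'
    rw [hX, Finset.mem_singleton] at hSin hS'in
    exact hne' (hSin.trans hS'in.symm)
  have hcount2 : r - 1 = 2 * Fv.card := by
    rw [← hDv, hDvU, Finset.card_biUnion hdisj]
    rw [Finset.sum_congr rfl (fun S hSFv => by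
      rw [pairs_through S v (Finset.mem_filter.mp hSFv).2,
        (hS S (Finset.mem_filter.mp hSFv).1).2])]
    rw [Finset.sum_const, smul_eq_mul, mul_comm]
  -- arithmetic conclusion
  obtain ⟨k, hk⟩ : ∃ k, r - 1 = 2 * k := ⟨Fv.card, hcount2⟩
  have hch : r.choose 2 = r * k := by
    rw [Nat.choose_two_right, show r * (r-1) = 2 * (r * k) by rw [hk]; ring,
      Nat.mul_div_cancel_left _ (by norm_num)]
  rw [hch] at hdvd3
  rcases (Nat.Prime.dvd_mul (by norm_num)).mp hdvd3 with h3 | h3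
  · right; omega
  · left; omega

/-- For an integer `r ≥ 3`, the sequence `(1, r, C(r,2), C(r,2)/3)` is a pure f-vector
if and only if `r ≡ 1` or `3 (mod 6)` (Kirkman's theorem on Steiner triple systems). -/
theorem pure_fvector_steiner_iff (r : ℕ) (hr : 3 ≤ r) :
    IsPureFVector 2
        (fun i => if i = 0 then r else if i = 1 then r.choose 2 else r.choose 2 / 3) ↔
      (r % 6 = 1 ∨ r % 6 = 3) := by
  constructor
  · exact necessity r hr
  · rintro (h6 | h6)
    · exact skolem_case r hr h6
    · exact bose_case r hr h6
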